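/- Let C : ℝ → ℝⁿ be an arclength-parametrized translating-rotating soliton: C'' = A C + v + λ C' with A v = 0. Then Z = Π_{N(A)}∘C satisfies Z'' = v + λ(s) Z', and Z(s) = Z(0) + Φ₁(s) Z'(0) + Φ_p(s) v where Φ₁ solves Φ₁'' = λ Φ₁', Φ₁(0)=0, Φ₁'(0)=1, and Φ_p solves Φ_p'' = λ Φ_p' + 1, Φ_p(0)=Φ_p'(0)=0. In particular Z(s) lies in the affine plane through Z(0) spanned by Z'(0) and v. -/

import Mathlib

open Matrix
open scoped RealInnerProductSpace

theorem stmt12 (n : ℕ) (A : Matrix (Fin n) (Fin n) ℝ) (hA : Aᵀ = -A)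
    (v : EuclideanSpace ℝ (Fin n)) (hv : A.toEuclideanLin v = 0)
    (C : ℝ → EuclideanSpace ℝ (Fin n)) (lam : ℝ → ℝ)
    (hC : ContDiff ℝ 2 C)
    (harc : ∀ s, ‖deriv C s‖ = 1)
    (hlam : ∀ s, lam s = -⟪A.toEuclideanLin (C s) + v, deriv C s⟫)
    (heq : ∀ s, deriv (deriv C) s
      = A.toEuclideanLin (C s) + v + lam s • deriv C s)
    (Z : ℝ → EuclideanSpace ℝ (Fin n))
    (hZ : ∀ s, Z s =
      (Submodule.orthogonalProjection (LinearMap.ker A.toEuclideanLin) (C s) :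
        EuclideanSpace ℝ (Fin n)))
    (Φ₁ Φp : ℝ → ℝ)
    (hΦ₁ : ContDiff ℝ 2 Φ₁)
    (hΦ₁eq : ∀ s, deriv (deriv Φ₁) s = lam s * deriv Φ₁ s)
    (hΦ₁0 : Φ₁ 0 = 0) (hΦ₁0' : deriv Φ₁ 0 = 1)
    (hΦp : ContDiff ℝ 2 Φp)
    (hΦpeq : ∀ s, deriv (deriv Φp) s = lam s * deriv Φp s + 1)
    (hΦp0 : Φp 0 = 0) (hΦp0' : deriv Φp 0 = 0) :
    (∀ s, deriv (deriv Z) s = v + lam s • deriv Z s) ∧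
    (∀ s, Z s = Z 0 + Φ₁ s • deriv Z 0 + Φp s • v) := by
  classical
  set K := LinearMap.ker A.toEuclideanLin with hKdef
  set P : EuclideanSpace ℝ (Fin n) →L[ℝ] EuclideanSpace ℝ (Fin n) :=
    K.subtypeL.comp (Submodule.orthogonalProjection K) with hPdef
  have hPapp : ∀ x, P x = (Submodule.orthogonalProjection K x : EuclideanSpace ℝ (Fin n)) :=
    fun _ => rfl
  have hPv : P v = v := by
    rw [hPapp]; exact Submodule.starProjection_eq_self_iff.2 hv
  have hadj : LinearMap.adjoint A.toEuclideanLin = - A.toEuclideanLin := by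
    rw [← Matrix.toEuclideanLin_conjTranspose_eq_adjoint,
      Matrix.conjTranspose_eq_transpose_of_trivial, hA, map_neg]
  have hPA : ∀ x, P (A.toEuclideanLin x) = 0 := by
    intro x
    rw [hPapp]
    have hmem : A.toEuclideanLin x ∈ Kᗮ := by
      rw [Submodule.mem_orthogonal]
      intro u hu
      have h1 : ⟪u, A.toEuclideanLin x⟫ = ⟪LinearMap.adjoint A.toEuclideanLin u, x⟫ :=
        (LinearMap.adjoint_inner_left _ _ _).symm
      rw [h1, hadj]
      have hu0 : A.toEuclideanLin u = 0 := hu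
      simp [hu0]
    rw [Submodule.orthogonalProjectionOnto_apply_of_mem_orthogonal hmem]
    simp
  -- differentiability facts
  have hCsplit := (contDiff_succ_iff_deriv).1 (show ContDiff ℝ (1 + 1) C from hC)
  have hCdiff : Differentiable ℝ C := hCsplit.1
  have hC'cd : ContDiff ℝ 1 (deriv C) := hCsplit.2.2
  have hC'diff : Differentiable ℝ (deriv C) := hC'cd.differentiable one_ne_zero
  have hΦ₁split := (contDiff_succ_iff_deriv).1 (show ContDiff ℝ (1 + 1) Φ₁ from hΦ₁)
  have hΦ₁diff : Differentiable ℝ Φ₁ := hΦ₁split.1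
  have hΦ₁'diff : Differentiable ℝ (deriv Φ₁) := hΦ₁split.2.2.differentiable one_ne_zero
  have hΦpsplit := (contDiff_succ_iff_deriv).1 (show ContDiff ℝ (1 + 1) Φp from hΦp)
  have hΦpdiff : Differentiable ℝ Φp := hΦpsplit.1
  have hΦp'diff : Differentiable ℝ (deriv Φp) := hΦpsplit.2.2.differentiable one_ne_zero
  have hZfun : Z = fun s => P (C s) := funext fun s => hZ s
  have hZderiv : ∀ s, HasDerivAt Z (P (deriv C s)) s := by
    intro s
    rw [hZfun]
    exact P.hasFDerivAt.comp_hasDerivAt s (hCdiff s).hasDerivAt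
  have hdZ : deriv Z = fun s => P (deriv C s) := funext fun s => (hZderiv s).deriv
  have hZ'deriv : ∀ s, HasDerivAt (deriv Z) (v + lam s • deriv Z s) s := by
    intro s
    have h1 : HasDerivAt (fun u => P (deriv C u)) (P (deriv (deriv C) s)) s :=
      P.hasFDerivAt.comp_hasDerivAt s (hC'diff s).hasDerivAt
    have h2 : P (deriv (deriv C) s) = v + lam s • P (deriv C s) := by
      rw [heq s, map_add, map_add, P.map_smul, hPA, hPv, zero_add]
    rw [hdZ]
    simpa [h2] using h1
  refine ⟨fun s => (hZ'deriv s).deriv, ?_⟩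
  -- continuity of lam
  have hAlin : Continuous fun s => A.toEuclideanLin (C s) + v :=
    ((A.toEuclideanLin.continuous_of_finiteDimensional).comp hCdiff.continuous).add
      continuous_const
  have hlamc : Continuous lam := by
    have h : Continuous fun s => -⟪A.toEuclideanLin (C s) + v, deriv C s⟫ :=
      (hAlin.inner hC'cd.continuous).neg
    rw [show lam = fun s => -⟪A.toEuclideanLin (C s) + v, deriv C s⟫ from funext hlam]
    exact h
  -- the difference of derivatives
  set y : ℝ → EuclideanSpace ℝ (Fin n) :=
    fun s => deriv Z s - (deriv Φ₁ s • deriv Z 0 + deriv Φp s • v) with hydef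
  have hyderiv : ∀ s, HasDerivAt y (lam s • y s) s := by
    intro s
    have h2 : HasDerivAt (fun u => deriv Φ₁ u • deriv Z 0 + deriv Φp u • v)
        (deriv (deriv Φ₁) s • deriv Z 0 + deriv (deriv Φp) s • v) s :=
      ((hΦ₁'diff s).hasDerivAt.smul_const _).add ((hΦp'diff s).hasDerivAt.smul_const _)
    have h3 := (hZ'deriv s).sub h2
    refine h3.congr_deriv ?_
    rw [hΦ₁eq s, hΦpeq s, hydef]
    simp only [smul_sub, smul_add, smul_smul, add_smul, one_smul]
    module
  have hy0 : y 0 = 0 := by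
    simp [hydef, hΦ₁0', hΦp0']
  -- integrating factor
  have hL : ∀ s, HasDerivAt (fun u => ∫ t in (0:ℝ)..u, lam t) (lam s) s := by
    intro s
    exact intervalIntegral.integral_hasDerivAt_right
      (hlamc.intervalIntegrable _ _)
      (hlamc.stronglyMeasurable.stronglyMeasurableAtFilter)
      hlamc.continuousAt
  set g : ℝ → EuclideanSpace ℝ (Fin n) :=
    fun s => Real.exp (-(∫ t in (0:ℝ)..s, lam t)) • y s with hgdef
  have hg : ∀ s, HasDerivAt g 0 s := by
    intro s
    have h1 : HasDerivAt (fun u => Real.exp (-(∫ t in (0:ℝ)..u, lam t)))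
        (-lam s * Real.exp (-(∫ t in (0:ℝ)..s, lam t))) s := by
      have := ((hL s).neg).exp
      simpa [mul_comm] using this
    have h2 := h1.smul (hyderiv s)
    refine h2.congr_deriv ?_
    rw [smul_smul]
    module
  have hgdiff : Differentiable ℝ g := fun s => (hg s).differentiableAt
  have hgconst : ∀ s, g s = g 0 := fun s =>
    is_const_of_deriv_eq_zero hgdiff (fun x => (hg x).deriv) s 0
  have hy : ∀ s, y s = 0 := by
    intro s
    have h := hgconst s
    rw [hgdef] at h
    simp only [intervalIntegral.integral_same, neg_zero, Real.exp_zero, one_smul, hy0] at h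
    rcases smul_eq_zero.1 h with h' | h'
    · exact absurd h' (Real.exp_ne_zero _)
    · exact h'
  -- now Z - W has zero derivative
  set D : ℝ → EuclideanSpace ℝ (Fin n) :=
    fun s => Z s - (Z 0 + Φ₁ s • deriv Z 0 + Φp s • v) with hDdef
  have hDderiv : ∀ s, HasDerivAt D (y s) s := by
    intro s
    have h2 : HasDerivAt (fun u => Z 0 + Φ₁ u • deriv Z 0 + Φp u • v)
        (deriv Φ₁ s • deriv Z 0 + deriv Φp s • v) s := by
      have := ((hasDerivAt_const s (Z 0)).add
        ((hΦ₁diff s).hasDerivAt.smul_const (deriv Z 0))).add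
        ((hΦpdiff s).hasDerivAt.smul_const v)
      exact this.congr_deriv (by simp)
    have h3 := (hZderiv s).sub h2
    have hdZ' : deriv Z s = P (deriv C s) := (hZderiv s).deriv
    exact h3.congr_deriv (by simp [hydef, hdZ'])
  have hDdiff : Differentiable ℝ D := fun s => (hDderiv s).differentiableAt
  have hDconst : ∀ s, D s = D 0 := fun s =>
    is_const_of_deriv_eq_zero hDdiff (fun x => by rw [(hDderiv x).deriv, hy x]) s 0
  intro s
  have h := hDconst s
  rw [hDdef] at h
  simp only [hΦ₁0, hΦp0, zero_smul, add_zero, sub_self] at h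
  exact sub_eq_zero.1 h
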